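/- Let A be a Boolean algebra, X = UV(A) its space of proper filters with topology generated by {â | a ∈ A}, and for open U let U* = int(X \ U) be the pseudocomplement. If U is compact open in X, then ¬U = U*, where ¬U = {F | ∀ proper filters F' ⊇ F, F' ∉ U}. -/

import Mathlib

/-- A proper filter of a Boolean algebra. -/
structure PropFilter (A : Type*) [BooleanAlgebra A] where
  carrier : Set A
  upward : ∀ a b : A, a ∈ carrier → a ≤ b → b ∈ carrier
  inf_mem : ∀ a b : A, a ∈ carrier → b ∈ carrier → a ⊓ b ∈ carrier
  top_mem : (⊤ : A) ∈ carrier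
  proper : (⊥ : A) ∉ carrier

variable {A : Type*} [BooleanAlgebra A]

/-- The basic (sub)basis sets of `UV(A)`. -/
def hat (a : A) : Set (PropFilter A) := {F | a ∈ F.carrier}

/-- The upper Vietoris topology on the set of proper filters, generated by the sets `hat a`. -/
instance uvTop : TopologicalSpace (PropFilter A) :=
  TopologicalSpace.generateFrom {S | ∃ a : A, S = hat a}

lemma hat_basis :
    TopologicalSpace.IsTopologicalBasis {S : Set (PropFilter A) | ∃ a : A, S = hat a} := by
  refine ⟨?_, ?_, rfl⟩
  · rintro t₁ ⟨a, rfl⟩ t₂ ⟨b, rfl⟩ F ⟨hFa, hFb⟩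
    refine ⟨hat (a ⊓ b), ⟨a ⊓ b, rfl⟩, F.inf_mem a b hFa hFb, fun G hG => ?_⟩
    exact ⟨G.upward _ _ hG inf_le_left, G.upward _ _ hG inf_le_right⟩
  · apply Set.eq_univ_of_forall
    intro F
    exact Set.mem_sUnion.2 ⟨hat ⊤, ⟨⊤, rfl⟩, F.top_mem⟩

lemma hat_isOpen (a : A) : IsOpen (hat a) := hat_basis.isOpen ⟨a, rfl⟩

lemma finset_inf_mem (F : PropFilter A) {ι : Type*} [DecidableEq ι] (t : Finset ι) (f : ι → A)
    (h : ∀ i ∈ t, f i ∈ F.carrier) : t.inf f ∈ F.carrier := by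
  induction t using Finset.induction with
  | empty => simpa using F.top_mem
  | insert _ _ hi ih =>
      rw [Finset.inf_insert]
      exact F.inf_mem _ _ (h _ (Finset.mem_insert_self _ _))
        (ih fun i hi' => h i (Finset.mem_insert_of_mem hi'))

/-- The filter generated by a proper filter `F` and an element `a` compatible with `F`. -/
def extFilter (F : PropFilter A) (a : A) (h : ∀ b ∈ F.carrier, b ⊓ a ≠ ⊥) : PropFilter A where
  carrier := {x | ∃ b ∈ F.carrier, b ⊓ a ≤ x}
  upward := fun x y ⟨b, hb, hle⟩ hxy => ⟨b, hb, hle.trans hxy⟩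
  inf_mem := fun x y ⟨b, hb, hbx⟩ ⟨c, hc, hcy⟩ =>
    ⟨b ⊓ c, F.inf_mem _ _ hb hc,
      le_trans (le_inf (inf_le_inf_right a inf_le_left) (inf_le_inf_right a inf_le_right))
        (inf_le_inf hbx hcy)⟩
  top_mem := ⟨⊤, F.top_mem, le_top⟩
  proper := fun ⟨b, hb, hle⟩ => h b hb (le_bot_iff.1 hle)

theorem stmt14 (U : Set (PropFilter A)) (hc : IsCompact U) (ho : IsOpen U) :
    {F : PropFilter A | ∀ F' : PropFilter A, F.carrier ⊆ F'.carrier → F' ∉ U}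
      = interior Uᶜ := by
  classical
  -- cover U by basic opens contained in U
  have hcov : ∀ G : PropFilter A, G ∈ U → ∃ a : A, G ∈ hat a ∧ hat a ⊆ U := by
    intro G hG
    obtain ⟨s, ⟨a, rfl⟩, h1, h2⟩ := hat_basis.exists_subset_of_mem_open hG ho
    exact ⟨a, h1, h2⟩
  choose! a ha hsub using hcov
  obtain ⟨b', hb'U, hb'fin, hb'cov⟩ :=
    hc.elim_finite_subcover_image (fun G (_ : G ∈ U) => hat_isOpen (a G))
      (fun G hG => Set.mem_biUnion hG (ha G hG))
  ext F
  simp only [Set.mem_setOf_eq]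
  constructor
  · intro hF
    by_cases hcase : ∃ G ∈ b', ∀ b ∈ F.carrier, b ⊓ a G ≠ ⊥
    · -- then F extends to a proper filter in U : contradiction
      obtain ⟨G, hGb', hcompat⟩ := hcase
      exfalso
      refine hF (extFilter F (a G) hcompat) (fun x hx => ⟨x, hx, inf_le_left⟩) ?_
      have : extFilter F (a G) hcompat ∈ hat (a G) := ⟨⊤, F.top_mem, by simp⟩
      exact hsub G (hb'U hGb') this
    · push_neg at hcase
      choose! b hbF hbbot using hcase
      set t : Finset (PropFilter A) := hb'fin.toFinset with ht
      have hBmem : t.inf b ∈ F.carrier := by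
        refine finset_inf_mem F t b fun G hG => hbF G ?_
        simpa [ht] using hG
      have hsubc : hat (t.inf b) ⊆ Uᶜ := by
        intro H hH hHU
        obtain ⟨G, hGb', hGa⟩ := Set.mem_iUnion₂.1 (hb'cov hHU)
        have hle : t.inf b ⊓ a G ≤ ⊥ := by
          have h1 : t.inf b ≤ b G := Finset.inf_le (by simpa [ht] using hGb')
          calc t.inf b ⊓ a G ≤ b G ⊓ a G := inf_le_inf_right _ h1
            _ = ⊥ := hbbot G hGb'
        exact H.proper (H.upward _ _ (H.inf_mem _ _ hH hGa) hle)
      exact interior_maximal hsubc (hat_isOpen _) hBmem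
  · intro hF F' hFF'
    obtain ⟨s, ⟨c, rfl⟩, h1, h2⟩ :=
      hat_basis.exists_subset_of_mem_open hF isOpen_interior
    exact (h2.trans interior_subset) (hFF' h1)
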